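/- Let f : (0,∞) → (0,∞) be measurable with f locally integrable on [0,∞) and f(t) > 0 for a.e. t, and define F(t) = ∫₀ᵗ f(s) ds for t > 0. If f is regularly varying at 0 with index ρ ∈ (−1,∞), then F is regularly varying at 0 with index ρ+1, and moreover F(t) ∼ t·f(t)/(ρ+1) as t → 0⁺, i.e. lim_{t→0⁺} F(t)·(ρ+1)/(t·f(t)) = 1. -/

import Mathlib

open MeasureTheory Filter Set Topology Real

noncomputable section

/-- `f : (0,∞) → (0,∞)` is regularly varying at `0` with index `ρ`:
for every `λ > 0`, `f(λt)/f(t) → λ^ρ` as `t → 0⁺`. -/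
def RegVaryAt0 (f : ℝ → ℝ) (ρ : ℝ) : Prop :=
  ∀ l : ℝ, 0 < l →
    Tendsto (fun t => f (l * t) / f t) (𝓝[>] (0:ℝ)) (𝓝 (l ^ ρ))

lemma uct_core {k : ℝ → ℝ} (hk : Measurable k)
    (hlim : ∀ v : ℝ, Tendsto (fun x => k (x + v) - k x) atTop (𝓝 0))
    {C : ℝ} (hC : 0 < C) {x u : ℕ → ℝ} (hx : Tendsto x atTop atTop)
    (hu : ∀ n, |u n| ≤ C) :
    Tendsto (fun n => k (x n + u n) - k (x n)) atTop (𝓝 0) := by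
  rw [NormedAddCommGroup.tendsto_nhds_zero]
  intro ε hε
  have hε2 : (0:ℝ) < ε/2 := by linarith
  set y : ℕ → ℝ := fun n => x n + u n with hy
  have hytop : Tendsto y atTop atTop := by
    have h1 : Tendsto (fun n => x n + (-C)) atTop atTop :=
      tendsto_atTop_add_const_right _ _ hx
    refine tendsto_atTop_mono (fun n => ?_) h1
    have := (abs_le.1 (hu n)).1
    simp only [hy]; linarith
  set A : ℕ → Set ℝ := fun m => {t | |k (x m + t) - k (x m)| < ε/2} with hA
  set B : ℕ → Set ℝ := fun m => {t | |k (y m + t) - k (y m)| < ε/2} with hB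
  have hAmeas : ∀ m, MeasurableSet (A m) := by
    intro m
    have : Measurable fun t => |k (x m + t) - k (x m)| :=
      ((hk.comp (measurable_const.add measurable_id)).sub measurable_const).abs
    exact measurableSet_lt this measurable_const
  have hBmeas : ∀ m, MeasurableSet (B m) := by
    intro m
    have : Measurable fun t => |k (y m + t) - k (y m)| :=
      ((hk.comp (measurable_const.add measurable_id)).sub measurable_const).abs
    exact measurableSet_lt this measurable_const
  set E : ℕ → Set ℝ := fun n => Icc C (3*C) ∩ ⋂ m, ⋂ (_ : n ≤ m), A m with hE
  set G : ℕ → Set ℝ := fun n => Icc 0 (4*C) ∩ ⋂ m, ⋂ (_ : n ≤ m), B m with hG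
  have hEmeas : ∀ n, MeasurableSet (E n) := fun n =>
    measurableSet_Icc.inter (MeasurableSet.iInter fun m => MeasurableSet.iInter fun _ => hAmeas m)
  have hGmeas : ∀ n, MeasurableSet (G n) := fun n =>
    measurableSet_Icc.inter (MeasurableSet.iInter fun m => MeasurableSet.iInter fun _ => hBmeas m)
  have hEmono : Monotone E := by
    intro a b hab
    refine inter_subset_inter le_rfl ?_
    exact fun t ht => mem_iInter₂.2 fun m hm => mem_iInter₂.1 ht m (hab.trans hm)
  have hGmono : Monotone G := by
    intro a b hab
    refine inter_subset_inter le_rfl ?_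
    exact fun t ht => mem_iInter₂.2 fun m hm => mem_iInter₂.1 ht m (hab.trans hm)
  have hEcover : ∀ t ∈ Icc C (3*C), ∃ n, t ∈ E n := by
    intro t ht
    have h0 : Tendsto (fun m => k (x m + t) - k (x m)) atTop (𝓝 0) := (hlim t).comp hx
    have := (Metric.tendsto_nhds.1 h0) (ε/2) hε2
    rw [eventually_atTop] at this
    obtain ⟨n, hn⟩ := this
    refine ⟨n, ht, mem_iInter₂.2 fun m hm => ?_⟩
    have := hn m hm
    exact (by simpa [Real.dist_eq] using this : |k (x m + t) - k (x m)| < ε/2)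
  have hGcover : ∀ t ∈ Icc 0 (4*C), ∃ n, t ∈ G n := by
    intro t ht
    have h0 : Tendsto (fun m => k (y m + t) - k (y m)) atTop (𝓝 0) := (hlim t).comp hytop
    have := (Metric.tendsto_nhds.1 h0) (ε/2) hε2
    rw [eventually_atTop] at this
    obtain ⟨n, hn⟩ := this
    refine ⟨n, ht, mem_iInter₂.2 fun m hm => ?_⟩
    have := hn m hm
    exact (by simpa [Real.dist_eq] using this : |k (y m + t) - k (y m)| < ε/2)
  have hDE : Tendsto (fun n => volume (Icc C (3*C) \ E n)) atTop (𝓝 0) := by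
    have h1 : Tendsto (volume ∘ fun n => Icc C (3*C) \ E n) atTop
        (𝓝 (volume (⋂ n, Icc C (3*C) \ E n))) := by
      refine tendsto_measure_iInter_atTop
        (fun n => (measurableSet_Icc.diff (hEmeas n)).nullMeasurableSet)
        (fun a b hab => diff_subset_diff_right (hEmono hab)) ⟨0, ?_⟩
      exact ((measure_mono diff_subset).trans_lt measure_Icc_lt_top).ne
    have h2 : (⋂ n, Icc C (3*C) \ E n) = ∅ := by
      rw [eq_empty_iff_forall_notMem]
      intro t ht
      rw [mem_iInter] at ht
      obtain ⟨n, hn⟩ := hEcover t (ht 0).1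
      exact (ht n).2 hn
    rwa [h2, measure_empty] at h1
  have hDG : Tendsto (fun n => volume (Icc 0 (4*C) \ G n)) atTop (𝓝 0) := by
    have h1 : Tendsto (volume ∘ fun n => Icc 0 (4*C) \ G n) atTop
        (𝓝 (volume (⋂ n, Icc 0 (4*C) \ G n))) := by
      refine tendsto_measure_iInter_atTop
        (fun n => (measurableSet_Icc.diff (hGmeas n)).nullMeasurableSet)
        (fun a b hab => diff_subset_diff_right (hGmono hab)) ⟨0, ?_⟩
      exact ((measure_mono diff_subset).trans_lt measure_Icc_lt_top).ne
    have h2 : (⋂ n, Icc 0 (4*C) \ G n) = ∅ := by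
      rw [eq_empty_iff_forall_notMem]
      intro t ht
      rw [mem_iInter] at ht
      obtain ⟨n, hn⟩ := hGcover t (ht 0).1
      exact (ht n).2 hn
    rwa [h2, measure_empty] at h1
  have hofpos : (0:ENNReal) < ENNReal.ofReal (C/2) := ENNReal.ofReal_pos.2 (by linarith)
  have hsmallE : ∀ᶠ n in atTop, volume (Icc C (3*C) \ E n) < ENNReal.ofReal (C/2) :=
    hDE.eventually_lt_const hofpos
  have hsmallG : ∀ᶠ n in atTop, volume (Icc 0 (4*C) \ G n) < ENNReal.ofReal (C/2) :=
    hDG.eventually_lt_const hofpos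
  obtain ⟨n, hn⟩ := (hsmallE.and hsmallG).exists_forall_of_atTop
  refine eventually_atTop.2 ⟨n, fun m hm => ?_⟩
  -- find a good point t
  have hSne : (E m ∩ {t | t - u m ∈ G m}).Nonempty := by
    by_contra hS
    rw [not_nonempty_iff_eq_empty] at hS
    have hcover : Icc C (3*C) ⊆
        (Icc C (3*C) \ E m) ∪ ((fun t => t - u m) ⁻¹' (Icc 0 (4*C) \ G m)) := by
      intro t ht
      by_cases htE : t ∈ E m
      · right
        have htu : t - u m ∈ Icc 0 (4*C) := by
          obtain ⟨h1, h2⟩ := ht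
          obtain ⟨h3, h4⟩ := abs_le.1 (hu m)
          rw [mem_Icc]
          constructor <;> linarith
        refine ⟨htu, fun hG' => ?_⟩
        have : t ∈ E m ∩ {t | t - u m ∈ G m} := ⟨htE, hG'⟩
        rw [hS] at this
        exact this
      · exact Or.inl ⟨ht, htE⟩
    have hmeasineq : volume (Icc C (3*C)) ≤
        volume (Icc C (3*C) \ E m) + volume ((fun t => t - u m) ⁻¹' (Icc 0 (4*C) \ G m)) :=
      (measure_mono hcover).trans (measure_union_le _ _)
    have hpre : volume ((fun t => t - u m) ⁻¹' (Icc 0 (4*C) \ G m))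
        = volume (Icc 0 (4*C) \ G m) := by
      have : (fun t : ℝ => t - u m) = fun t => t + (-u m) := by
        funext t; ring
      rw [this, measure_preimage_add_right]
    rw [hpre] at hmeasineq
    have hlt : volume (Icc C (3*C)) < ENNReal.ofReal (C/2) + ENNReal.ofReal (C/2) :=
      hmeasineq.trans_lt (ENNReal.add_lt_add (hn m hm).1 (hn m hm).2)
    rw [Real.volume_Icc, ← ENNReal.ofReal_add (by linarith) (by linarith)] at hlt
    have := (ENNReal.ofReal_lt_ofReal_iff (by linarith)).1 hlt
    linarith
  obtain ⟨t, htE, htG⟩ := hSne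
  have h1 : |k (x m + t) - k (x m)| < ε/2 := mem_iInter₂.1 htE.2 m le_rfl
  have h2 : |k (y m + (t - u m)) - k (y m)| < ε/2 := mem_iInter₂.1 htG.2 m le_rfl
  have hxy : y m + (t - u m) = x m + t := by simp only [hy]; ring
  rw [hxy] at h2
  have : |k (y m) - k (x m)| < ε := by
    have := abs_sub_le (k (y m)) (k (x m + t)) (k (x m))
    rw [abs_sub_comm] at h2
    linarith
  simpa [hy, Real.norm_eq_abs] using this

-- positivity of the integral
lemma int_pos_aux {f : ℝ → ℝ} (hpos : ∀ t > (0:ℝ), 0 < f t) {a b : ℝ}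
    (hab : a < b) (ha : 0 ≤ a) (hint : IntegrableOn f (Ioc a b)) :
    0 < ∫ s in Ioc a b, f s := by
  have hnn : 0 ≤ᵐ[volume.restrict (Ioc a b)] f := by
    rw [EventuallyLE, ae_restrict_iff' measurableSet_Ioc]
    exact Eventually.of_forall fun x hx => (hpos x (lt_of_le_of_lt ha hx.1)).le
  rw [setIntegral_pos_iff_support_of_nonneg_ae hnn hint]
  have hsub : Ioc a b ⊆ Function.support f ∩ Ioc a b := fun x hx =>
    ⟨ne_of_gt (hpos x (lt_of_le_of_lt ha hx.1)), hx⟩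
  calc (0:ENNReal) < volume (Ioc a b) := by
        rw [Real.volume_Ioc]; exact ENNReal.ofReal_pos.2 (by linarith)
    _ ≤ _ := measure_mono hsub

lemma tendsto_exp_neg_nhdsWithin : Tendsto (fun x : ℝ => Real.exp (-x)) atTop (𝓝[>] (0:ℝ)) := by
  refine tendsto_nhdsWithin_iff.2 ⟨?_, Eventually.of_forall fun x => Real.exp_pos _⟩
  exact Real.tendsto_exp_atBot.comp tendsto_neg_atTop_atBot

lemma unif_half {f : ℝ → ℝ} (hmeas : Measurable f) (hpos : ∀ t > (0:ℝ), 0 < f t)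
    {ρ : ℝ} (hrv : RegVaryAt0 f ρ) {ε : ℝ} (hε : 0 < ε) :
    ∀ᶠ t in 𝓝[>] (0:ℝ), ∀ u ∈ Icc (1/2:ℝ) 1, |f (u * t) / f t - u ^ ρ| ≤ ε := by
  set k : ℝ → ℝ := fun x => Real.log (f (Real.exp (-x))) + ρ * x with hkdef
  have hk : Measurable k :=
    (Real.measurable_log.comp (hmeas.comp (Real.measurable_exp.comp measurable_neg))).add
      (measurable_const.mul measurable_id)
  have hlim : ∀ v : ℝ, Tendsto (fun x => k (x + v) - k x) atTop (𝓝 0) := by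
    intro v
    set l : ℝ := Real.exp (-v) with hl
    have hlpos : 0 < l := Real.exp_pos _
    have hcomp : Tendsto (fun x => f (l * Real.exp (-x)) / f (Real.exp (-x))) atTop
        (𝓝 (l ^ ρ)) := (hrv l hlpos).comp tendsto_exp_neg_nhdsWithin
    have hlog : Tendsto (fun x => Real.log (f (l * Real.exp (-x)) / f (Real.exp (-x)))) atTop
        (𝓝 (ρ * (-v))) := by
      have hcont : ContinuousAt Real.log (l ^ ρ) :=
        Real.continuousAt_log (ne_of_gt (Real.rpow_pos_of_pos hlpos ρ))
      have := hcont.tendsto.comp hcomp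
      rwa [Real.log_rpow hlpos, hl, Real.log_exp] at this
    have heq : (fun x => k (x + v) - k x)
        = fun x => Real.log (f (l * Real.exp (-x)) / f (Real.exp (-x))) + ρ * v := by
      funext x
      have h1 : Real.exp (-(x + v)) = l * Real.exp (-x) := by
        rw [hl, ← Real.exp_add]; ring_nf
      have h2 : f (l * Real.exp (-x)) ≠ 0 :=
        ne_of_gt (hpos _ (by positivity))
      have h3 : f (Real.exp (-x)) ≠ 0 := ne_of_gt (hpos _ (Real.exp_pos _))
      rw [hkdef]
      simp only [h1, Real.log_div h2 h3]
      ring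
    rw [heq]
    have := hlog.add_const (ρ * v)
    simpa using this
  by_contra hcon
  rw [Filter.not_eventually] at hcon
  have hexists : ∀ n : ℕ, ∃ t : ℝ, (t ∈ Ioo (0:ℝ) (1/(n+1))) ∧
      ∃ u ∈ Icc (1/2:ℝ) 1, ε < |f (u * t) / f t - u ^ ρ| := by
    intro n
    have hmem : Ioo (0:ℝ) (1/(n+1)) ∈ 𝓝[>] (0:ℝ) :=
      Ioo_mem_nhdsGT_of_mem ⟨le_rfl, by positivity⟩
    obtain ⟨t, hbadt, htmem⟩ := (hcon.and_eventually (eventually_mem_set.2 hmem)).exists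
    push_neg at hbadt
    obtain ⟨u, hu2, hbadu⟩ := hbadt
    exact ⟨t, htmem, u, hu2, hbadu⟩
  choose t ht u hu hbad using hexists
  have htpos : ∀ n, 0 < t n := fun n => (ht n).1
  have ht0 : Tendsto t atTop (𝓝 0) := by
    refine squeeze_zero (fun n => (htpos n).le) (fun n => (ht n).2.le) ?_
    exact tendsto_one_div_add_atTop_nhds_zero_nat
  set x : ℕ → ℝ := fun n => -Real.log (t n) with hx
  set v : ℕ → ℝ := fun n => -Real.log (u n) with hv
  have hxtop : Tendsto x atTop atTop := by
    have : Tendsto (fun n => Real.log (t n)) atTop atBot := by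
      refine Real.tendsto_log_nhdsGT_zero.comp ?_
      exact tendsto_nhdsWithin_iff.2 ⟨ht0, Eventually.of_forall htpos⟩
    exact tendsto_neg_atBot_atTop.comp this
  have hvbound : ∀ n, |v n| ≤ Real.log 2 := by
    intro n
    have h1 : (1/2:ℝ) ≤ u n := (hu n).1
    have h2 : u n ≤ 1 := (hu n).2
    have hup : (0:ℝ) < u n := lt_of_lt_of_le (by norm_num) h1
    have hle : Real.log (u n) ≤ 0 := Real.log_nonpos hup.le h2
    have hge : -Real.log 2 ≤ Real.log (u n) := by
      have := Real.log_le_log (by norm_num : (0:ℝ) < 1/2) h1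
      rw [Real.log_div one_ne_zero two_ne_zero, Real.log_one] at this
      linarith
    rw [hv, abs_le]
    constructor <;> simp only [neg_le, le_neg] <;> linarith
  have huct := uct_core hk hlim (by positivity : (0:ℝ) < Real.log 2) hxtop hvbound
  -- rewrite the conclusion in terms of the ratio
  have hupos : ∀ n, (0:ℝ) < u n := fun n => lt_of_lt_of_le (by norm_num) (hu n).1
  set w : ℕ → ℝ := fun n => (f (u n * t n) / f (t n)) / (u n) ^ ρ with hw
  have hwpos : ∀ n, 0 < w n := by
    intro n
    have h1 := hpos _ (mul_pos (hupos n) (htpos n))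
    have h2 := hpos _ (htpos n)
    have h3 := Real.rpow_pos_of_pos (hupos n) ρ
    exact div_pos (div_pos h1 h2) h3
  have hkey : (fun n => k (x n + v n) - k (x n)) = fun n => Real.log (w n) := by
    funext n
    have he1 : Real.exp (-(x n)) = t n := by
      rw [hx]; simp [Real.exp_log (htpos n)]
    have he2 : Real.exp (-(x n + v n)) = u n * t n := by
      rw [hx, hv]
      have : -(-Real.log (t n) + -Real.log (u n)) = Real.log (u n) + Real.log (t n) := by ring
      rw [this, Real.exp_add, Real.exp_log (htpos n), Real.exp_log (hupos n)]
    have h1 : f (u n * t n) ≠ 0 := ne_of_gt (hpos _ (mul_pos (hupos n) (htpos n)))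
    have h2 : f (t n) ≠ 0 := ne_of_gt (hpos _ (htpos n))
    have h3 : (u n) ^ ρ ≠ 0 := ne_of_gt (Real.rpow_pos_of_pos (hupos n) ρ)
    rw [hkdef]
    simp only [he1, he2, hw, Real.log_div (div_ne_zero h1 h2) h3,
      Real.log_div h1 h2, Real.log_rpow (hupos n)]
    ring
  rw [hkey] at huct
  have hwto1 : Tendsto w atTop (𝓝 1) := by
    have h0 := (Real.continuous_exp.tendsto 0).comp huct
    rw [Real.exp_zero] at h0
    refine h0.congr fun n => ?_
    simp only [Function.comp_apply]
    rw [Real.exp_log (hwpos n)]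
  have hB : ∀ n, (u n) ^ ρ ≤ Real.exp (|ρ| * Real.log 2) := by
    intro n
    rw [Real.rpow_def_of_pos (hupos n)]
    refine Real.exp_le_exp.2 ?_
    calc Real.log (u n) * ρ ≤ |Real.log (u n) * ρ| := le_abs_self _
      _ = |Real.log (u n)| * |ρ| := abs_mul _ _
      _ ≤ Real.log 2 * |ρ| := by
          refine mul_le_mul_of_nonneg_right ?_ (abs_nonneg ρ)
          have h5 := hvbound n
          simp only [hv, abs_neg] at h5
          exact h5
      _ = |ρ| * Real.log 2 := mul_comm _ _
  have hdiff : Tendsto (fun n => f (u n * t n) / f (t n) - (u n) ^ ρ) atTop (𝓝 0) := by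
    have heq : ∀ n, f (u n * t n) / f (t n) - (u n) ^ ρ = (u n) ^ ρ * (w n - 1) := by
      intro n
      have h2 : f (t n) ≠ 0 := ne_of_gt (hpos _ (htpos n))
      have h3 : (u n) ^ ρ ≠ 0 := ne_of_gt (Real.rpow_pos_of_pos (hupos n) ρ)
      simp only [hw]
      field_simp
    have hb : Tendsto (fun n => Real.exp (|ρ| * Real.log 2) * |w n - 1|) atTop (𝓝 0) := by
      have h1 : Tendsto (fun n => |w n - 1|) atTop (𝓝 0) := by
        have := (hwto1.sub_const 1).abs
        simpa using this
      simpa using h1.const_mul (Real.exp (|ρ| * Real.log 2))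
    refine squeeze_zero_norm (fun n => ?_) hb
    rw [heq n, Real.norm_eq_abs, abs_mul,
      abs_of_pos (Real.rpow_pos_of_pos (hupos n) ρ)]
    exact mul_le_mul_of_nonneg_right (hB n) (abs_nonneg _)
  have : ∀ᶠ n in atTop, |f (u n * t n) / f (t n) - (u n) ^ ρ| < ε := by
    have := Metric.tendsto_nhds.1 hdiff ε hε
    refine this.mono fun n hn => ?_
    simpa [Real.dist_eq] using hn
  obtain ⟨n, hn⟩ := this.exists
  exact absurd (hbad n) (not_lt.2 hn.le)

lemma partA {f : ℝ → ℝ} (hpos : ∀ t > (0:ℝ), 0 < f t)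
    (hint : ∀ x > (0:ℝ), IntegrableOn f (Ioc 0 x))
    {ρ : ℝ} (hrv : RegVaryAt0 f ρ)
    {F : ℝ → ℝ} (hF : ∀ t > (0:ℝ), F t = ∫ s in Ioc (0:ℝ) t, f s) :
    RegVaryAt0 F (ρ + 1) := by
  intro l hl
  rw [Metric.tendsto_nhds]
  intro ε hε
  set ε' : ℝ := ε / (2*l) with hε'
  have hε'pos : 0 < ε' := by positivity
  have hev : ∀ᶠ s in 𝓝[>] (0:ℝ), dist (f (l*s)/f s) (l ^ ρ) < ε' :=
    Metric.tendsto_nhds.1 (hrv l hl) ε' hε'pos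
  obtain ⟨δ, hδpos, hδ⟩ := Metric.mem_nhdsWithin_iff.1 hev
  filter_upwards [Ioo_mem_nhdsGT_of_mem (Set.mem_Ico.2 ⟨le_rfl, hδpos⟩)] with t ht
  obtain ⟨ht0, htδ⟩ := ht
  have hflt : ∀ u ∈ Ioc (0:ℝ) t, |f (l*u)/f u - l ^ ρ| ≤ ε' := by
    intro u hu
    have humem : u ∈ Metric.ball (0:ℝ) δ ∩ Ioi 0 := by
      refine ⟨?_, hu.1⟩
      rw [Metric.mem_ball, Real.dist_eq, sub_zero, abs_of_pos hu.1]
      exact lt_of_le_of_lt hu.2 htδ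
    have := hδ humem
    rw [Set.mem_setOf_eq, Real.dist_eq] at this
    exact this.le
  have hb : ∀ u ∈ Ioc (0:ℝ) t, f (l*u) ≤ (l ^ ρ + ε') * f u ∧ (l ^ ρ - ε') * f u ≤ f (l*u) := by
    intro u hu
    have h1 := abs_le.1 (hflt u hu)
    have h2 := hpos u hu.1
    constructor
    · exact (div_le_iff₀ h2).1 (by linarith [h1.2])
    · exact (le_div_iff₀ h2).1 (by linarith [h1.1])
  have hlt0 : 0 < l * t := mul_pos hl ht0
  have hfi_t : IntegrableOn f (Ioc 0 t) := hint t ht0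
  have hII : IntervalIntegrable f volume 0 (l*t) := by
    rw [intervalIntegrable_iff, uIoc_of_le hlt0.le]
    exact hint _ hlt0
  have hg : IntervalIntegrable (fun u => f (l*u)) volume 0 t := by
    have h := hII.comp_mul_left (c := l)
    have e1 : (0:ℝ)/l = 0 := by simp
    have e2 : (l*t)/l = t := by field_simp
    rwa [e1, e2] at h
  have hgIoc : IntegrableOn (fun u => f (l*u)) (Ioc 0 t) := by
    have h := intervalIntegrable_iff.1 hg
    rwa [uIoc_of_le ht0.le] at h
  set I : ℝ := ∫ s in Ioc (0:ℝ) t, f s with hI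
  set J : ℝ := ∫ u in Ioc (0:ℝ) t, f (l*u) with hJ
  have hIpos : 0 < I := int_pos_aux hpos ht0 le_rfl hfi_t
  have hJub : J ≤ (l ^ ρ + ε') * I := by
    have h := setIntegral_mono_on hgIoc (hfi_t.const_mul (l ^ ρ + ε')) measurableSet_Ioc
      (fun u hu => (hb u hu).1)
    rwa [MeasureTheory.integral_const_mul] at h
  have hJlb : (l ^ ρ - ε') * I ≤ J := by
    have h := setIntegral_mono_on (hfi_t.const_mul (l ^ ρ - ε')) hgIoc measurableSet_Ioc
      (fun u hu => (hb u hu).2)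
    rwa [MeasureTheory.integral_const_mul] at h
  have hFlt : F (l*t) = l * J := by
    rw [hF _ hlt0]
    have h1 : ∫ u in (0:ℝ)..t, f (l*u) = l⁻¹ • ∫ x in (l*0)..(l*t), f x :=
      intervalIntegral.integral_comp_mul_left f (ne_of_gt hl)
    rw [mul_zero, intervalIntegral.integral_of_le ht0.le,
      intervalIntegral.integral_of_le hlt0.le, smul_eq_mul] at h1
    rw [← hJ] at h1
    rw [h1]
    field_simp
  have hFt : F t = I := by rw [hF t ht0]
  have key : |F (l*t)/F t - l ^ (ρ+1)| ≤ l * ε' := by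
    rw [hFlt, hFt, Real.rpow_add_one (ne_of_gt hl)]
    have hIne : I ≠ 0 := ne_of_gt hIpos
    have heq : l * J / I - l ^ ρ * l = l * (J - l ^ ρ * I) / I := by
      field_simp
    rw [heq, abs_div, abs_of_pos hIpos, abs_mul, abs_of_pos hl, div_le_iff₀ hIpos]
    have habs : |J - l ^ ρ * I| ≤ ε' * I := abs_le.2 ⟨by linarith, by linarith⟩
    nlinarith [habs, hIpos.le, hl.le]
  have hfin : l * ε' = ε/2 := by
    rw [hε']; field_simp
  rw [Real.dist_eq]
  calc |F (l*t)/F t - l ^ (ρ+1)| ≤ l * ε' := key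
    _ = ε/2 := hfin
    _ < ε := by linarith

lemma partB {f : ℝ → ℝ} (hmeas : Measurable f) (hpos : ∀ t > (0:ℝ), 0 < f t)
    (hint : ∀ x > (0:ℝ), IntegrableOn f (Ioc 0 x))
    {ρ : ℝ} (hρ : -1 < ρ) (hrv : RegVaryAt0 f ρ)
    {F : ℝ → ℝ} (hF : ∀ t > (0:ℝ), F t = ∫ s in Ioc (0:ℝ) t, f s) :
    Tendsto (fun t => F t * (ρ + 1) / (t * f t)) (𝓝[>] (0:ℝ)) (𝓝 1) := by
  have hρ1 : (0:ℝ) < ρ + 1 := by linarith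
  set c2 : ℝ := 1 - (1/2:ℝ) ^ (ρ+1) with hc2
  have hhalf : (0:ℝ) < (1/2:ℝ) ^ (ρ+1) := Real.rpow_pos_of_pos (by norm_num) _
  have hc2pos : 0 < c2 := by
    have : (1/2:ℝ) ^ (ρ+1) < 1 := Real.rpow_lt_one (by norm_num) (by norm_num) hρ1
    simp only [hc2]; linarith
  set c1 : ℝ := c2 / (ρ+1) with hc1
  have hc1pos : 0 < c1 := div_pos hc2pos hρ1
  -- the rpow integral
  have hrint : ∫ u in (1/2:ℝ)..1, u ^ ρ = c1 := by
    rw [integral_rpow (Or.inl hρ)]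
    simp only [Real.one_rpow, hc1, hc2]
  -- step B1 : the integral of the ratio converges
  have hD : Tendsto (fun t => ∫ u in (1/2:ℝ)..1, f (u*t) / f t) (𝓝[>] (0:ℝ)) (𝓝 c1) := by
    rw [Metric.tendsto_nhds]
    intro ε hε
    filter_upwards [unif_half hmeas hpos hrv hε, self_mem_nhdsWithin] with t hB ht0
    rw [mem_Ioi] at ht0
    -- integrability
    have hfi2 : IntervalIntegrable f volume (t/2) t := by
      rw [intervalIntegrable_iff, uIoc_of_le (by linarith)]
      exact (hint t ht0).mono_set (Ioc_subset_Ioc (by linarith) le_rfl)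
    have hgI : IntervalIntegrable (fun u => f (u*t)) volume (1/2) 1 := by
      have h := hfi2.comp_mul_right (c := t)
      have e1 : (t/2)/t = (1/2:ℝ) := by field_simp
      have e2 : t/t = (1:ℝ) := by field_simp
      rwa [e1, e2] at h
    have hgI' : IntervalIntegrable (fun u => f (u*t) / f t) volume (1/2) 1 :=
      hgI.div_const (f t)
    have hrI : IntervalIntegrable (fun u : ℝ => u ^ ρ) volume (1/2) 1 :=
      intervalIntegral.intervalIntegrable_rpow' hρ
    have hsub : (∫ u in (1/2:ℝ)..1, f (u*t) / f t) - ∫ u in (1/2:ℝ)..1, u ^ ρ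
        = ∫ u in (1/2:ℝ)..1, (f (u*t) / f t - u ^ ρ) :=
      (intervalIntegral.integral_sub hgI' hrI).symm
    rw [Real.dist_eq, ← hrint, hsub]
    have hIocEq : ∫ u in (1/2:ℝ)..1, (f (u*t) / f t - u ^ ρ)
        = ∫ u in Ioc (1/2:ℝ) 1, (f (u*t) / f t - u ^ ρ) :=
      intervalIntegral.integral_of_le (by norm_num)
    rw [hIocEq]
    have hbound : ‖∫ u in Ioc (1/2:ℝ) 1, (f (u*t) / f t - u ^ ρ)‖ ≤ ε * (volume (Ioc (1/2:ℝ) 1)).toReal := by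
      refine norm_setIntegral_le_of_norm_le_const ?_ ?_
      · rw [Real.volume_Ioc]; exact ENNReal.ofReal_lt_top
      · intro u hu
        rw [Real.norm_eq_abs]
        exact hB u ⟨hu.1.le, hu.2⟩
      all_goals
      · have h1 : IntegrableOn (fun u => f (u*t) / f t - u ^ ρ) (Ioc (1/2:ℝ) 1) := by
          have := (hgI'.sub hrI)
          rw [intervalIntegrable_iff, uIoc_of_le (by norm_num : (1/2:ℝ) ≤ 1)] at this
          exact this
        exact h1.aestronglyMeasurable
    have hvol : (volume (Ioc (1/2:ℝ) 1)).toReal = 1/2 := by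
      rw [Real.volume_Ioc]; rw [ENNReal.toReal_ofReal (by norm_num)]; norm_num
    rw [Real.norm_eq_abs] at hbound
    rw [hvol] at hbound
    calc |∫ u in Ioc (1/2:ℝ) 1, (f (u*t) / f t - u ^ ρ)| ≤ ε * (1/2) := hbound
      _ < ε := by linarith
  -- step B2 : ratio of F's
  have hFA := partA hpos hint hrv hF
  have hq : Tendsto (fun t => 1 - F ((1/2) * t) / F t) (𝓝[>] (0:ℝ)) (𝓝 c2) := by
    have := (hFA (1/2) (by norm_num)).const_sub 1
    simpa [hc2] using this
  -- eventual identity : (F t - F (t/2)) / (t * f t) = ∫ ratio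
  have hDt : Tendsto (fun t => (F t - F ((1/2)*t)) / (t * f t)) (𝓝[>] (0:ℝ)) (𝓝 c1) := by
    refine hD.congr' ?_
    filter_upwards [self_mem_nhdsWithin] with t ht0
    rw [mem_Ioi] at ht0
    have ht2 : (0:ℝ) < t/2 := by linarith
    have hfpos := hpos t ht0
    -- F t - F (t/2) = ∫_{Ioc (t/2) t} f
    have hsplit : F t - F ((1/2)*t) = ∫ s in Ioc (t/2) t, f s := by
      have h1 : F t = ∫ s in Ioc (0:ℝ) t, f s := hF t ht0
      have h2 : F ((1/2)*t) = ∫ s in Ioc (0:ℝ) (t/2), f s := by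
        have e : (1/2:ℝ)*t = t/2 := by ring
        rw [e, hF (t/2) (by linarith)]
      have hunion : Ioc (0:ℝ) t = Ioc 0 (t/2) ∪ Ioc (t/2) t := by
        rw [Ioc_union_Ioc_eq_Ioc (by linarith) (by linarith)]
      have hdisj : Disjoint (Ioc (0:ℝ) (t/2)) (Ioc (t/2) t) := (Ioc_disjoint_Ioc_of_le le_rfl)
      have hadd : ∫ s in Ioc (0:ℝ) t, f s
          = (∫ s in Ioc (0:ℝ) (t/2), f s) + ∫ s in Ioc (t/2) t, f s := by
        rw [hunion]
        exact setIntegral_union hdisj measurableSet_Ioc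
          ((hint t ht0).mono_set (Ioc_subset_Ioc le_rfl (by linarith)))
          ((hint t ht0).mono_set (Ioc_subset_Ioc (by linarith) le_rfl))
      rw [h1, h2, hadd]; ring
    -- ∫_{Ioc (t/2) t} f = t * ∫_{1/2..1} f(u t)
    have hcov : ∫ s in Ioc (t/2) t, f s = t * ∫ u in (1/2:ℝ)..1, f (u*t) := by
      have h1 : ∫ u in (1/2:ℝ)..1, f (u*t) = t⁻¹ • ∫ x in ((1/2)*t)..(1*t), f x :=
        intervalIntegral.integral_comp_mul_right f (ne_of_gt ht0)
      rw [one_mul, smul_eq_mul] at h1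
      have e1 : (1/2)*t = t/2 := by ring
      rw [e1, intervalIntegral.integral_of_le (by linarith : t/2 ≤ t)] at h1
      rw [h1]
      field_simp
    have hdivsum : ∫ u in (1/2:ℝ)..1, f (u*t) / f t = (∫ u in (1/2:ℝ)..1, f (u*t)) / f t :=
      intervalIntegral.integral_div (f t) _
    rw [hdivsum, hsplit, hcov]
    field_simp
    simp_rw [mul_comm t]
  -- combine
  have hmain : Tendsto (fun t => ((F t - F ((1/2)*t)) / (t * f t)) / (1 - F ((1/2)*t) / F t) * (ρ+1))
      (𝓝[>] (0:ℝ)) (𝓝 (c1 / c2 * (ρ+1))) :=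
    (hDt.div hq (ne_of_gt hc2pos)).mul_const (ρ+1)
  have hval : c1 / c2 * (ρ+1) = 1 := by
    rw [hc1]; field_simp
  rw [hval] at hmain
  refine hmain.congr' ?_
  filter_upwards [self_mem_nhdsWithin] with t ht0
  rw [mem_Ioi] at ht0
  have hFt : 0 < F t := by
    rw [hF t ht0]; exact int_pos_aux hpos ht0 le_rfl (hint t ht0)
  have hFdiff : 0 < F t - F ((1/2)*t) := by
    have hsplit : F t - F ((1/2)*t) = ∫ s in Ioc (t/2) t, f s := by
      have h1 : F t = ∫ s in Ioc (0:ℝ) t, f s := hF t ht0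
      have h2 : F ((1/2)*t) = ∫ s in Ioc (0:ℝ) (t/2), f s := by
        have e : (1/2:ℝ)*t = t/2 := by ring
        rw [e, hF (t/2) (by linarith)]
      have hunion : Ioc (0:ℝ) t = Ioc 0 (t/2) ∪ Ioc (t/2) t := by
        rw [Ioc_union_Ioc_eq_Ioc (by linarith) (by linarith)]
      have hadd : ∫ s in Ioc (0:ℝ) t, f s
          = (∫ s in Ioc (0:ℝ) (t/2), f s) + ∫ s in Ioc (t/2) t, f s := by
        rw [hunion]
        exact setIntegral_union (Ioc_disjoint_Ioc_of_le le_rfl) measurableSet_Ioc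
          ((hint t ht0).mono_set (Ioc_subset_Ioc le_rfl (by linarith)))
          ((hint t ht0).mono_set (Ioc_subset_Ioc (by linarith) le_rfl))
      rw [h1, h2, hadd]; ring
    rw [hsplit]
    exact int_pos_aux hpos (by linarith) (by linarith)
      ((hint t ht0).mono_set (Ioc_subset_Ioc (by linarith) le_rfl))
  have hfpos := hpos t ht0
  have h1 : 1 - F ((1/2)*t) / F t = (F t - F ((1/2)*t)) / F t := by
    field_simp
  have h2 : F t - F ((1/2)*t) ≠ 0 := ne_of_gt hFdiff
  rw [h1, div_div_div_eq, mul_comm (t * f t) (F t - F ((1/2)*t)),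
    mul_div_mul_left _ _ h2]
  ring

theorem stmt0 (f : ℝ → ℝ) (ρ : ℝ)
    (hmeas : Measurable f)
    (hpos : ∀ t > (0:ℝ), 0 < f t)
    (hint : ∀ x > (0:ℝ), IntegrableOn f (Ioc 0 x))
    (hρ : -1 < ρ)
    (hrv : RegVaryAt0 f ρ)
    (F : ℝ → ℝ) (hF : ∀ t > (0:ℝ), F t = ∫ s in Ioc (0:ℝ) t, f s) :
    RegVaryAt0 F (ρ + 1) ∧
      Tendsto (fun t => F t * (ρ + 1) / (t * f t)) (𝓝[>] (0:ℝ)) (𝓝 1) :=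
  ⟨partA hpos hint hrv hF, partB hmeas hpos hint hρ hrv hF⟩
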